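/- In the power series expansion (in 1/q) of −∑_{i=1}^n π'_q(i)·log(1 − 1/q^i) = ∑_{j=0}^∞ c_j·q^{−j}, the coefficient c_j equals ∑_{d=1}^n (1/(j+d))·∑_{r | (j+d)/d, r ≤ n/d} μ(r); in particular c_0 = ∑_{d=1}^n 1/d, and c_j = 0 for all 1 ≤ j ≤ n/2. -/

import Mathlib

open Finset

/-- Gauss' formula `π'_q(i) = (1/i) ∑_{d∣i} q^d μ(i/d)` for the number of monic irreducible
polynomials of degree `i` over `F_q`, as a real-valued function of `q`. -/
noncomputable def gaussPi (q : ℝ) (i : ℕ) : ℝ :=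
  (1 / (i : ℝ)) * ∑ d ∈ i.divisors, q ^ d * ((ArithmeticFunction.moebius (i / d) : ℤ) : ℝ)

/-- The coefficient `c_j` in the expansion `−∑_{i=1}^n π'_q(i) log(1 − 1/qⁱ) = ∑_j c_j q^{−j}`:
`c_j = ∑_{d=1}^n (1/(j+d)) ∑_{r ∣ (j+d)/d, r ≤ n/d} μ(r)` (the inner sum being empty unless
`d ∣ j + d`). -/
noncomputable def mertensCoeff (n j : ℕ) : ℝ :=
  ∑ d ∈ Icc 1 n, (1 / ((j : ℝ) + d)) *
    (if d ∣ j + d then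
      ∑ r ∈ ((j + d) / d).divisors.filter (fun r => r * d ≤ n),
        ((ArithmeticFunction.moebius r : ℤ) : ℝ)
     else 0)

noncomputable def Fterm (q : ℝ) (d r k : ℕ) : ℝ :=
  ((ArithmeticFunction.moebius r : ℤ) : ℝ) / ((d:ℝ) * r * (k+1)) *
    q ^ ((d:ℤ) - (d:ℤ) * r * (k+1))

def pairSet (n : ℕ) : Finset (ℕ × ℕ) :=
  (Icc 1 n ×ˢ Icc 1 n).filter (fun p => p.1 * p.2 ≤ n)

lemma pairSet_eq_biUnion (n : ℕ) :
    pairSet n = (Icc 1 n).biUnion (fun i => i.divisorsAntidiagonal) := by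
  ext p
  simp only [pairSet, mem_filter, mem_product, mem_Icc, mem_biUnion, Nat.mem_divisorsAntidiagonal]
  constructor
  · rintro ⟨⟨⟨h1, h2⟩, ⟨h3, h4⟩⟩, h5⟩
    exact ⟨p.1 * p.2, ⟨Nat.one_le_iff_ne_zero.mpr (by positivity), h5⟩, rfl, by positivity⟩
  · rintro ⟨i, ⟨hi1, hi2⟩, hpi, hi0⟩
    subst hpi
    have hp1 : 1 ≤ p.1 := Nat.one_le_iff_ne_zero.mpr (by intro h; rw [h] at hi1; simp at hi1)
    have hp2 : 1 ≤ p.2 := Nat.one_le_iff_ne_zero.mpr (by intro h; rw [h] at hi1; simp at hi1)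
    refine ⟨⟨⟨hp1, ?_⟩, ⟨hp2, ?_⟩⟩, hi2⟩
    · calc p.1 = p.1 * 1 := (mul_one _).symm
        _ ≤ p.1 * p.2 := Nat.mul_le_mul_left _ hp2
        _ ≤ n := hi2
    · calc p.2 = 1 * p.2 := (one_mul _).symm
        _ ≤ p.1 * p.2 := Nat.mul_le_mul_right _ hp1
        _ ≤ n := hi2

lemma sum_pairs (n : ℕ) (h : ℕ → ℕ → ℝ) :
    ∑ i ∈ Icc 1 n, ∑ p ∈ i.divisorsAntidiagonal, h p.1 p.2
      = ∑ p ∈ pairSet n, h p.1 p.2 := by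
  rw [pairSet_eq_biUnion, Finset.sum_biUnion]
  intro a _ b _ hab
  apply Finset.disjoint_left.mpr
  intro p hpa hpb
  rw [Nat.mem_divisorsAntidiagonal] at hpa hpb
  exact hab (hpa.1.symm.trans hpb.1)

lemma lhs_per_i (q : ℝ) (hq : 1 < q) (i : ℕ) (hi : 1 ≤ i) :
    gaussPi q i * (-(Real.log (1 - 1 / q ^ i)))
      = ∑ p ∈ i.divisorsAntidiagonal, ∑' k : ℕ, Fterm q p.1 p.2 k := by
  have hq0 : (0:ℝ) < q := lt_trans zero_lt_one hq
  have hqi : (1:ℝ) < q ^ i := one_lt_pow₀ hq (by omega)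
  have hx : |1 / q ^ i| < 1 := by
    rw [abs_of_pos (by positivity)]
    rw [div_lt_one (by positivity)]
    exact hqi
  have hs := Real.hasSum_pow_div_log_of_abs_lt_one hx
  rw [← hs.tsum_eq]
  rw [Nat.sum_divisorsAntidiagonal (fun d r => ∑' k : ℕ, Fterm q d r k)]
  rw [gaussPi, Finset.mul_sum, Finset.sum_mul]
  refine Finset.sum_congr rfl fun d hd => ?_
  rw [← tsum_mul_left]
  refine tsum_congr fun k => ?_
  obtain ⟨hdvd, hi0⟩ := Nat.mem_divisors.mp hd
  set r := i / d with hr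
  have hdr : d * r = i := Nat.mul_div_cancel' hdvd
  have hd1 : 1 ≤ d := Nat.pos_of_ne_zero (by intro h; rw [h, zero_mul] at hdr; omega)
  have hr1 : 1 ≤ r := Nat.pos_of_ne_zero (by intro h; rw [h, mul_zero] at hdr; omega)
  rw [Fterm]
  have e1 : (1 / q ^ i : ℝ) = q ^ (-(i:ℤ)) := by
    rw [one_div, ← zpow_natCast q i, ← zpow_neg]
  have e2 : (1 / q ^ i : ℝ) ^ (k + 1) = q ^ (-(i:ℤ) * (k+1)) := by
    rw [e1, ← zpow_natCast (q ^ (-(i:ℤ))) (k+1), ← zpow_mul]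
    push_cast
    ring_nf
  have e3 : q ^ d * (1 / q ^ i : ℝ) ^ (k + 1) = q ^ ((d:ℤ) - (d:ℤ) * r * (k+1)) := by
    rw [e2, ← zpow_natCast q d, ← zpow_add₀ (ne_of_gt hq0)]
    congr 1
    have : (i : ℤ) = (d : ℤ) * r := by exact_mod_cast hdr.symm
    rw [this]; ring
  have hik : (i : ℝ) = (d : ℝ) * r := by exact_mod_cast hdr.symm
  rw [div_eq_mul_inv (((ArithmeticFunction.moebius r : ℤ)):ℝ), ← e3]
  rw [hik]
  have hk1 : ((k:ℝ) + 1) ≠ 0 := by positivity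
  field_simp

noncomputable def Gterm (q : ℝ) (p : ℕ × ℕ) (j : ℕ) : ℝ :=
  if p.1 ∣ j ∧ p.2 ∣ (j / p.1 + 1) then
    ((ArithmeticFunction.moebius p.2 : ℤ) : ℝ) / ((j:ℝ) + p.1) * q ^ (-(j:ℤ))
  else 0

lemma summable_geom {q : ℝ} (hq : 1 < q) : Summable (fun j : ℕ => q ^ (-(j:ℤ))) := by
  have h : (fun j : ℕ => q ^ (-(j:ℤ))) = fun j : ℕ => (q⁻¹) ^ j := by
    funext j; rw [zpow_neg, zpow_natCast, inv_pow]
  rw [h]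
  exact summable_geometric_of_lt_one (by positivity) (inv_lt_one_of_one_lt₀ hq)

lemma summable_Gterm {q : ℝ} (hq : 1 < q) (p : ℕ × ℕ) (hp : 1 ≤ p.1) :
    Summable (Gterm q p) := by
  have hq0 : (0:ℝ) < q := lt_trans zero_lt_one hq
  refine Summable.of_norm_bounded (summable_geom hq) fun j => ?_
  rw [Gterm]
  split_ifs with h
  · rw [norm_mul, norm_div]
    have hz : (0:ℝ) < q ^ (-(j:ℤ)) := zpow_pos hq0 _
    rw [Real.norm_eq_abs (q ^ (-(j:ℤ))), abs_of_pos hz]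
    have h1 : ‖((ArithmeticFunction.moebius p.2 : ℤ) : ℝ)‖ ≤ 1 := by
      rw [Real.norm_eq_abs]
      exact_mod_cast (ArithmeticFunction.abs_moebius_le_one (n := p.2))
    have h2 : (1:ℝ) ≤ ‖((j:ℝ) + p.1)‖ := by
      rw [Real.norm_eq_abs, abs_of_pos (by positivity)]
      have : (1:ℝ) ≤ (p.1 : ℝ) := by exact_mod_cast hp
      linarith [Nat.cast_nonneg (α := ℝ) j]
    have h3 : ‖((ArithmeticFunction.moebius p.2 : ℤ) : ℝ)‖ / ‖((j:ℝ) + p.1)‖ ≤ 1 :=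
      div_le_one_of_le₀ (h1.trans h2) (norm_nonneg _)
    calc ‖((ArithmeticFunction.moebius p.2 : ℤ) : ℝ)‖ / ‖((j:ℝ) + p.1)‖ * q ^ (-(j:ℤ))
        ≤ 1 * q ^ (-(j:ℤ)) := mul_le_mul_of_nonneg_right h3 hz.le
      _ = q ^ (-(j:ℤ)) := one_mul _
  · simp only [norm_zero]
    positivity

lemma coeff_eq_sum_G (n : ℕ) (q : ℝ) (j : ℕ) :
    mertensCoeff n j * q ^ (-(j:ℤ)) = ∑ p ∈ pairSet n, Gterm q p j := by
  rw [pairSet, Finset.sum_filter, Finset.sum_product, mertensCoeff, Finset.sum_mul]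
  refine Finset.sum_congr rfl fun d hd => ?_
  rw [mem_Icc] at hd
  have hd1 : 1 ≤ d := hd.1
  by_cases hdvd : d ∣ j + d
  · have hdj : d ∣ j := (Nat.dvd_add_self_right).mp hdvd
    have hquot : (j + d) / d = j / d + 1 := Nat.add_div_right j hd1
    rw [if_pos hdvd, hquot]
    have hstep : ∀ r ∈ Icc 1 n, (if d * r ≤ n then Gterm q (d, r) j else 0)
        = (if r ∣ j / d + 1 ∧ r * d ≤ n then
            ((ArithmeticFunction.moebius r : ℤ) : ℝ) / ((j:ℝ) + d) * q ^ (-(j:ℤ)) else 0) := by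
      intro r _
      rw [Gterm]
      simp only
      by_cases h1 : d * r ≤ n <;> by_cases h2 : r ∣ j / d + 1 <;>
        simp [h1, h2, hdj, Nat.mul_comm d r]
    rw [Finset.sum_congr rfl hstep, ← Finset.sum_filter]
    have hsets : (Icc 1 n).filter (fun r => r ∣ j / d + 1 ∧ r * d ≤ n)
        = (j / d + 1).divisors.filter (fun r => r * d ≤ n) := by
      ext r
      simp only [mem_filter, mem_Icc, Nat.mem_divisors]
      constructor
      · rintro ⟨⟨hx1, hx2⟩, h3, h4⟩; exact ⟨⟨h3, Nat.succ_ne_zero _⟩, h4⟩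
      · rintro ⟨⟨h3, _⟩, h4⟩
        have hr1 : 1 ≤ r := Nat.pos_of_ne_zero (by intro h; rw [h] at h3; exact Nat.succ_ne_zero _ ((Nat.zero_dvd).mp h3)) 
        refine ⟨⟨hr1, ?_⟩, h3, h4⟩
        calc r = r * 1 := (mul_one r).symm
          _ ≤ r * d := Nat.mul_le_mul_left r hd1
          _ ≤ n := h4
    rw [hsets, Finset.mul_sum, Finset.sum_mul]
    refine Finset.sum_congr rfl fun r _ => ?_
    ring
  · rw [if_neg hdvd, mul_zero, zero_mul]
    refine (Finset.sum_eq_zero fun r _ => ?_).symm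
    have : ¬ (d ∣ j) := fun h => hdvd (Nat.dvd_add h (dvd_refl d))
    simp [Gterm, this]

lemma tsum_G_eq_tsum_F (q : ℝ) (hq : 1 < q) (d r : ℕ) (hd : 1 ≤ d) (hr : 1 ≤ r) :
    ∑' j : ℕ, Gterm q (d, r) j = ∑' k : ℕ, Fterm q d r k := by
  have hq0 : (0:ℝ) < q := lt_trans zero_lt_one hq
  set e : ℕ → ℕ := fun k => d * r * (k + 1) - d with he
  have hdr1 : d ≤ d * r := Nat.le_mul_of_pos_right d hr
  have hekey : ∀ k, e k + d = d * r * (k + 1) := by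
    intro k
    have : d ≤ d * r * (k + 1) := le_trans hdr1 (Nat.le_mul_of_pos_right _ (by omega))
    simp only [he]
    omega
  have hinj : Function.Injective e := by
    intro a b hab
    have ha := hekey a
    have hb := hekey b
    have : d * r * (a + 1) = d * r * (b + 1) := by omega
    have hdr0 : 0 < d * r := by positivity
    have := Nat.eq_of_mul_eq_mul_left hdr0 this
    omega
  have hsupp : Function.support (Gterm q (d, r)) ⊆ Set.range e := by
    intro j hj
    rw [Function.mem_support, Gterm] at hj
    simp only at hj
    by_cases hcond : d ∣ j ∧ r ∣ j / d + 1
    · obtain ⟨⟨s, hs⟩, ⟨m, hm⟩⟩ := hcond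
      have hsd : j / d = s := by rw [hs]; exact Nat.mul_div_cancel_left s (by omega)
      rw [hsd] at hm
      have hm1 : 1 ≤ m := by
        rcases Nat.eq_zero_or_pos m with h | h
        · rw [h, mul_zero] at hm; omega
        · exact h
      refine ⟨m - 1, ?_⟩
      have : d * (s + 1) = d * (r * m) := by rw [hm]
      have hds : d * s + d = d * r * m := by rw [Nat.mul_add, mul_one] at this; linarith [this]
      have : e (m - 1) + d = d * r * m := by rw [hekey]; congr 1; omega
      omega
    · exact absurd (if_neg hcond) hj
  rw [← Function.Injective.tsum_eq hinj hsupp]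
  refine tsum_congr fun k => ?_
  have hek := hekey k
  have hd_dvd : d ∣ e k := by
    have : d ∣ e k + d := by rw [hek]; exact Dvd.dvd.mul_right (Dvd.intro r rfl) _
    exact (Nat.dvd_add_self_right).mp this
  have hquot : e k / d + 1 = r * (k + 1) := by
    obtain ⟨t, ht⟩ := hd_dvd
    have : d * t + d = d * (r * (k+1)) := by rw [← ht, hek]; ring
    have ht2 : t + 1 = r * (k + 1) := by
      have := Nat.eq_of_mul_eq_mul_left (show 0 < d by omega)
        (show d * (t + 1) = d * (r * (k+1)) by rw [Nat.mul_add, mul_one]; omega)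
      exact this
    rw [ht, Nat.mul_div_cancel_left t (by omega)]
    exact ht2
  have hrdvd : r ∣ e k / d + 1 := by rw [hquot]; exact Dvd.intro (k+1) rfl
  rw [Gterm, Fterm]
  simp only
  rw [if_pos ⟨hd_dvd, hrdvd⟩]
  have hcast1 : ((e k : ℝ) + d) = (d:ℝ) * r * (k + 1) := by exact_mod_cast congrArg (Nat.cast (R := ℝ)) hek
  have hcast2 : (-(e k : ℤ)) = (d:ℤ) - (d:ℤ) * r * (k + 1) := by
    have : ((e k : ℤ) + d) = (d:ℤ) * r * (k + 1) := by exact_mod_cast congrArg (Nat.cast (R := ℤ)) hek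
    omega
  rw [hcast1, hcast2]

lemma main_identity (n : ℕ) (hn : 1 ≤ n) (q : ℝ) (hq : 1 < q) :
    -(∑ i ∈ Icc 1 n, gaussPi q i * Real.log (1 - 1 / q ^ i)) =
        ∑' j : ℕ, mertensCoeff n j * q ^ (-(j : ℤ)) := by
  have hL : -(∑ i ∈ Icc 1 n, gaussPi q i * Real.log (1 - 1 / q ^ i))
      = ∑ i ∈ Icc 1 n, gaussPi q i * (-(Real.log (1 - 1 / q ^ i))) := by
    rw [← Finset.sum_neg_distrib]
    exact Finset.sum_congr rfl fun i _ => (mul_neg _ _).symm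
  rw [hL]
  have hA : ∑ i ∈ Icc 1 n, gaussPi q i * (-(Real.log (1 - 1 / q ^ i)))
      = ∑ p ∈ pairSet n, ∑' k : ℕ, Fterm q p.1 p.2 k := by
    rw [← sum_pairs n (fun a b => ∑' k : ℕ, Fterm q a b k)]
    exact Finset.sum_congr rfl fun i hi => lhs_per_i q hq i (mem_Icc.mp hi).1
  rw [hA]
  have hB : ∑' j : ℕ, mertensCoeff n j * q ^ (-(j : ℤ))
      = ∑ p ∈ pairSet n, ∑' j : ℕ, Gterm q p j := by
    rw [← Summable.tsum_finsetSum (fun p hp => summable_Gterm hq p ?_)]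
    · exact tsum_congr fun j => coeff_eq_sum_G n q j
    · rw [pairSet, mem_filter, mem_product, mem_Icc] at hp
      exact hp.1.1.1
  rw [hB]
  refine Finset.sum_congr rfl fun p hp => ?_
  rw [pairSet, mem_filter, mem_product, mem_Icc, mem_Icc] at hp
  exact (tsum_G_eq_tsum_F q hq p.1 p.2 hp.1.1.1 hp.1.2.1).symm

theorem stmt_7 (n : ℕ) (hn : 1 ≤ n) (q : ℝ) (hq : 1 < q) :
    (-(∑ i ∈ Icc 1 n, gaussPi q i * Real.log (1 - 1 / q ^ i)) =
        ∑' j : ℕ, mertensCoeff n j * q ^ (-(j : ℤ))) ∧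
      mertensCoeff n 0 = (∑ d ∈ Icc 1 n, (1 : ℝ) / d) ∧
      ∀ j : ℕ, 1 ≤ j → 2 * j ≤ n → mertensCoeff n j = 0 := by
  refine ⟨main_identity n hn q hq, ?_, ?_⟩
  · unfold mertensCoeff
    refine Finset.sum_congr rfl fun d hd => ?_
    rw [mem_Icc] at hd
    have hd1 : 1 ≤ d := hd.1
    rw [if_pos (by simp), Nat.zero_add, Nat.div_self hd1]
    have h1 : Nat.divisors 1 = {1} := rfl
    rw [h1]
    have hfil : ({1} : Finset ℕ).filter (fun r => r * d ≤ n) = {1} := by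
      refine Finset.filter_true_of_mem fun r hr => ?_
      simp only [mem_singleton] at hr
      subst hr; simpa using hd.2
    rw [hfil]
    simp
  · intro j hj hjn
    unfold mertensCoeff
    refine Finset.sum_eq_zero fun d hd => ?_
    rw [mem_Icc] at hd
    have hd1 : 1 ≤ d := hd.1
    by_cases hdvd : d ∣ j + d
    · rw [if_pos hdvd]
      have hdj : d ∣ j := (Nat.dvd_add_self_right).mp hdvd
      have hdle : d ≤ j := Nat.le_of_dvd hj hdj
      set m := (j + d) / d with hm
      have hmd : m * d = j + d := Nat.div_mul_cancel hdvd
      have hm1 : m ≠ 1 := by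
        intro h; rw [h, one_mul] at hmd; omega
      have hfil : m.divisors.filter (fun r => r * d ≤ n) = m.divisors := by
        refine Finset.filter_true_of_mem fun r hr => ?_
        have hrm : r ≤ m := Nat.le_of_dvd (Nat.pos_of_ne_zero (Nat.mem_divisors.mp hr).2)
          (Nat.mem_divisors.mp hr).1
        calc r * d ≤ m * d := Nat.mul_le_mul_right d hrm
          _ = j + d := hmd
          _ ≤ 2 * j := by omega
          _ ≤ n := hjn
      rw [hfil]
      have h0 := congrArg (fun f : ArithmeticFunction ℤ => f m)
        ArithmeticFunction.moebius_mul_coe_zeta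
      simp only [ArithmeticFunction.coe_mul_zeta_apply, ArithmeticFunction.one_apply,
        if_neg hm1] at h0
      have hz : ∑ r ∈ m.divisors, ((ArithmeticFunction.moebius r : ℤ) : ℝ) = 0 := by
        exact_mod_cast h0
      rw [hz, mul_zero]
    · rw [if_neg hdvd, mul_zero]
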